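/- Let f̃ : ℝ^d → ℝ^d be a lift of a torus homeomorphism homotopic to the identity. Then the rotation set ρ(f̃) is non-empty, compact, and connected. -/

import Mathlib

open Set Metric

namespace RotSetAux

variable {d : ℕ}

/-- The set of average displacement vectors at time exactly `n`. -/
def Dn (F : (Fin d → ℝ) → (Fin d → ℝ)) (n : ℕ) : Set (Fin d → ℝ) :=
  Set.range fun z => (n : ℝ)⁻¹ • (F^[n] z - z)

/-- The set of average displacement vectors at times `≥ m`. -/
def En (F : (Fin d → ℝ) → (Fin d → ℝ)) (m : ℕ) : Set (Fin d → ℝ) :=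
  {w | ∃ n : ℕ, m ≤ n ∧ ∃ z : Fin d → ℝ, w = (n : ℝ)⁻¹ • (F^[n] z - z)}

variable {F : (Fin d → ℝ) → (Fin d → ℝ)} {M : ℝ}

lemma iter_bound (hM0 : 0 ≤ M) (hM : ∀ z, ‖F z - z‖ ≤ M) (n : ℕ) (z : Fin d → ℝ) :
    ‖F^[n] z - z‖ ≤ n * M := by
  induction n with
  | zero => simp
  | succ n ih =>
    have h1 : F^[n + 1] z - z = (F (F^[n] z) - F^[n] z) + (F^[n] z - z) := by
      rw [Function.iterate_succ_apply']; abel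
    calc ‖F^[n + 1] z - z‖ ≤ ‖F (F^[n] z) - F^[n] z‖ + ‖F^[n] z - z‖ := by
          rw [h1]; exact norm_add_le _ _
      _ ≤ M + n * M := add_le_add (hM _) ih
      _ = (n + 1 : ℕ) * M := by push_cast; ring

lemma avg_norm_le (hM0 : 0 ≤ M) (hM : ∀ z, ‖F z - z‖ ≤ M) (n : ℕ) (z : Fin d → ℝ) :
    ‖(n : ℝ)⁻¹ • (F^[n] z - z)‖ ≤ M := by
  rcases Nat.eq_zero_or_pos n with h | h
  · subst h; simp [hM0]
  · have hn : (0 : ℝ) < n := by exact_mod_cast h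
    rw [norm_smul, norm_inv, Real.norm_natCast]
    calc (n : ℝ)⁻¹ * ‖F^[n] z - z‖ ≤ (n : ℝ)⁻¹ * (n * M) := by
          exact mul_le_mul_of_nonneg_left (iter_bound hM0 hM n z) (by positivity)
      _ = M := by field_simp
    
lemma avg_diff_le (hM0 : 0 ≤ M) (hM : ∀ z, ‖F z - z‖ ≤ M) (n : ℕ) (z : Fin d → ℝ) :
    ‖((n + 1 : ℕ) : ℝ)⁻¹ • (F^[n + 1] z - z) - (n : ℝ)⁻¹ • (F^[n] z - z)‖
      ≤ 2 * M / (n + 1) := by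
  have h1 : F^[n + 1] z - z = (F^[n] z - z) + (F (F^[n] z) - F^[n] z) := by
    rw [Function.iterate_succ_apply']; abel
  have h2 : ((n + 1 : ℕ) : ℝ)⁻¹ • (F^[n + 1] z - z) - (n : ℝ)⁻¹ • (F^[n] z - z)
      = (((n : ℝ) + 1)⁻¹ - (n : ℝ)⁻¹) • (F^[n] z - z)
        + ((n : ℝ) + 1)⁻¹ • (F (F^[n] z) - F^[n] z) := by
    rw [h1]; push_cast; module
  have hc : |((n : ℝ) + 1)⁻¹ - (n : ℝ)⁻¹| * n ≤ ((n : ℝ) + 1)⁻¹ := by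
    rcases Nat.eq_zero_or_pos n with h | h
    · subst h; simp
    · have hn : (0 : ℝ) < n := by exact_mod_cast h
      have hle : ((n : ℝ) + 1)⁻¹ - (n : ℝ)⁻¹ ≤ 0 := by
        rw [sub_nonpos]
        exact inv_anti₀ hn (by linarith)
      rw [abs_of_nonpos hle, neg_sub]
      have : ((n:ℝ)⁻¹ - ((n:ℝ) + 1)⁻¹) * (n:ℝ) = ((n:ℝ) + 1)⁻¹ := by
        field_simp
        ring
      rw [this]
  have hn1 : (0:ℝ) < (n : ℝ) + 1 := by positivity
  calc ‖((n + 1 : ℕ) : ℝ)⁻¹ • (F^[n + 1] z - z) - (n : ℝ)⁻¹ • (F^[n] z - z)‖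
      ≤ ‖(((n : ℝ) + 1)⁻¹ - (n : ℝ)⁻¹) • (F^[n] z - z)‖
        + ‖((n : ℝ) + 1)⁻¹ • (F (F^[n] z) - F^[n] z)‖ := by rw [h2]; exact norm_add_le _ _
    _ ≤ |((n : ℝ) + 1)⁻¹ - (n : ℝ)⁻¹| * (n * M) + ((n : ℝ) + 1)⁻¹ * M := by
        gcongr
        · rw [norm_smul]
          exact mul_le_mul_of_nonneg_left (iter_bound hM0 hM n z) (abs_nonneg _)
        · rw [norm_smul, Real.norm_eq_abs, abs_of_pos (by positivity)]
          exact mul_le_mul_of_nonneg_left (hM _) (by positivity)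
    _ ≤ ((n : ℝ) + 1)⁻¹ * M + ((n : ℝ) + 1)⁻¹ * M := by
        gcongr ?_ + _
        rw [← mul_assoc]
        exact mul_le_mul_of_nonneg_right hc hM0
    _ = 2 * M / (n + 1) := by field_simp; ring


set_option maxHeartbeats 1000000 in
theorem main (F : (Fin d → ℝ) → (Fin d → ℝ)) (M : ℝ)
    (hF : Continuous F) (hM0 : 0 ≤ M) (hM : ∀ z, ‖F z - z‖ ≤ M) :
    (⋂ m : ℕ, closure (En F m)).Nonempty ∧ IsCompact (⋂ m : ℕ, closure (En F m)) ∧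
      IsConnected (⋂ m : ℕ, closure (En F m)) := by
  set A : ℕ → Set (Fin d → ℝ) := fun m => closure (En F m) with hA
  have hE_sub : ∀ m, En F m ⊆ closedBall 0 M := by
    rintro m w ⟨n, -, z, rfl⟩
    rw [mem_closedBall, dist_zero_right]
    exact avg_norm_le hM0 hM n z
  have hA_sub : ∀ m, A m ⊆ closedBall 0 M := fun m =>
    closure_minimal (hE_sub m) Metric.isClosed_closedBall
  have hA_compact : ∀ m, IsCompact (A m) := fun m =>
    (isCompact_closedBall 0 M).of_isClosed_subset isClosed_closure (hA_sub m)
  have hD_subE : ∀ m n, m ≤ n → Dn F n ⊆ En F m := by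
    rintro m n hmn w ⟨z, rfl⟩; exact ⟨n, hmn, z, rfl⟩
  have hE_anti : ∀ {m m' : ℕ}, m ≤ m' → En F m' ⊆ En F m := by
    rintro m m' h w ⟨n, hn, z, rfl⟩; exact ⟨n, h.trans hn, z, rfl⟩
  have hA_anti : ∀ {m m' : ℕ}, m ≤ m' → A m' ⊆ A m := fun h => closure_mono (hE_anti h)
  have hE_ne : ∀ m, (En F m).Nonempty := fun m => ⟨_, m, le_refl m, 0, rfl⟩
  have hA_ne : ∀ m, (A m).Nonempty := fun m => (hE_ne m).mono subset_closure
  have hρc : IsCompact (⋂ m, A m) :=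
    (hA_compact 0).of_isClosed_subset (isClosed_iInter fun m => isClosed_closure)
      (iInter_subset A 0)
  have hρne : (⋂ m, A m).Nonempty :=
    IsCompact.nonempty_iInter_of_sequence_nonempty_isCompact_isClosed A
      (fun i => hA_anti (Nat.le_succ i)) hA_ne (hA_compact 0) (fun i => isClosed_closure)
  refine ⟨hρne, hρc, hρne, ?_⟩
  intro U V hU hV hUV hsU hsV
  by_contra hcon
  rw [Set.not_nonempty_iff_eq_empty] at hcon
  obtain ⟨x, hxρ, hxU⟩ := hsU
  obtain ⟨y, hyρ, hyV⟩ := hsV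
  set ρ := ⋂ m, A m with hρdef
  have hmemUV : ∀ z ∈ ρ, ¬(z ∈ U ∧ z ∈ V) := fun z hz hzz =>
    (Set.eq_empty_iff_forall_notMem.mp hcon z) ⟨hz, hzz.1, hzz.2⟩
  set K1 : Set (Fin d → ℝ) := ρ \ V with hK1
  set K2 : Set (Fin d → ℝ) := ρ \ U with hK2
  have hK1c : IsCompact K1 := hρc.diff hV
  have hK2c : IsCompact K2 := hρc.diff hU
  have hK1ne : K1.Nonempty := ⟨x, hxρ, fun hxV => hmemUV x hxρ ⟨hxU, hxV⟩⟩
  have hK2ne : K2.Nonempty := ⟨y, hyρ, fun hyU => hmemUV y hyρ ⟨hyU, hyV⟩⟩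
  have hdisjK : Disjoint K1 K2 := by
    rw [Set.disjoint_left]
    rintro z ⟨hz, hzV⟩ ⟨-, hzU⟩
    rcases hUV hz with h | h
    exacts [hzU h, hzV h]
  obtain ⟨δ, hδ, hthick⟩ := hdisjK.exists_thickenings hK1c hK2c.isClosed
  set U' := thickening (δ/3) K1 with hU'def
  set V' := thickening (δ/3) K2 with hV'def
  have hU'o : IsOpen U' := isOpen_thickening
  have hV'o : IsOpen V' := isOpen_thickening
  have hsep : ∀ u ∈ U', ∀ v ∈ V', δ/3 ≤ dist u v := by
    intro u hu v hv
    by_contra hlt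
    push_neg at hlt
    obtain ⟨xx, hxx, hux⟩ := mem_thickening_iff.mp hu
    have hvK1 : v ∈ thickening δ K1 := by
      rw [mem_thickening_iff]
      refine ⟨xx, hxx, ?_⟩
      calc dist v xx ≤ dist v u + dist u xx := dist_triangle _ _ _
        _ < δ/3 + δ/3 := by rw [dist_comm v u]; exact add_lt_add hlt hux
        _ < δ := by linarith
    have hvK2 : v ∈ thickening δ K2 := thickening_mono (by linarith) K2 hv
    exact (Set.disjoint_left.mp hthick hvK1) hvK2
  have hdisj' : Disjoint U' V' := by
    rw [Set.disjoint_left]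
    intro z hz1 hz2
    have h1 := hsep z hz1 z hz2
    simp only [dist_self] at h1
    linarith
  have hρ_sub : ρ ⊆ U' ∪ V' := by
    intro z hz
    by_cases hzV : z ∈ V
    · exact Or.inr (self_subset_thickening (by linarith) K2
        ⟨hz, fun hzU => hmemUV z hz ⟨hzU, hzV⟩⟩)
    · exact Or.inl (self_subset_thickening (by linarith) K1 ⟨hz, hzV⟩)
  obtain ⟨t, ht⟩ := (hA_compact 0).elim_finite_subfamily_closed
      (fun m => A m ∩ (U' ∪ V')ᶜ)
      (fun m => isClosed_closure.inter (hU'o.union hV'o).isClosed_compl)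
      (by
        rw [Set.eq_empty_iff_forall_notMem]
        rintro z ⟨hz0, hz⟩
        rw [Set.mem_iInter] at hz
        have hzρ : z ∈ ρ := Set.mem_iInter.mpr fun m => (hz m).1
        exact (hz 0).2 (hρ_sub hzρ))
  set m₀ := t.sup id with hm₀
  have hAm₀ : A m₀ ⊆ U' ∪ V' := by
    intro z hz
    by_contra hzW
    refine Set.eq_empty_iff_forall_notMem.mp ht z ⟨hA_anti (Nat.zero_le m₀) hz, ?_⟩
    simp only [Set.mem_iInter]
    intro m hm
    exact ⟨hA_anti (Finset.le_sup (f := id) hm) hz, hzW⟩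
  obtain ⟨N₁, hN₁⟩ : ∃ N₁ : ℕ, ∀ n : ℕ, N₁ ≤ n → 2 * M / (n + 1) < δ / 3 := by
    obtain ⟨N₁, hN₁⟩ := exists_nat_gt (6 * M / δ)
    refine ⟨N₁, fun n hn => ?_⟩
    have hcast : (N₁ : ℝ) ≤ n := by exact_mod_cast hn
    have h6 : 6 * M / δ < (n : ℝ) + 1 := by linarith
    have h6' : 6 * M < ((n : ℝ) + 1) * δ := (div_lt_iff₀ hδ).mp h6
    rw [div_lt_div_iff₀ (by positivity) (by norm_num : (0:ℝ) < 3)]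
    nlinarith
  set N := max m₀ N₁ with hNdef
  have hDconn : ∀ n : ℕ, IsPreconnected (Dn F n) := fun n =>
    (isConnected_range (((hF.iterate n).sub continuous_id).const_smul
      ((n : ℝ)⁻¹))).isPreconnected
  have hDne : ∀ n : ℕ, (Dn F n).Nonempty := fun n => ⟨_, 0, rfl⟩
  have hDsub : ∀ n, N ≤ n → Dn F n ⊆ U' ∪ V' := fun n hn =>
    (hD_subE m₀ n ((le_max_left _ _).trans hn)).trans (subset_closure.trans hAm₀)
  have hDor : ∀ n, N ≤ n → Dn F n ⊆ U' ∨ Dn F n ⊆ V' := fun n hn =>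
    IsPreconnected.subset_or_subset hU'o hV'o hdisj' (hDsub n hn) (hDconn n)
  have hmeet : ∀ (K W : Set (Fin d → ℝ)), K.Nonempty → K ⊆ ρ → IsOpen W → K ⊆ W →
      ∀ m, ∃ n, m ≤ n ∧ (Dn F n ∩ W).Nonempty := by
    rintro K W ⟨p, hp⟩ hKsub hW hKW m
    have hpA : p ∈ A m := Set.mem_iInter.mp (hKsub hp) m
    obtain ⟨w, hwW, hwE⟩ := mem_closure_iff.mp hpA W hW (hKW hp)
    obtain ⟨n, hn, z, rfl⟩ := hwE
    exact ⟨n, hn, ⟨_, ⟨z, rfl⟩, hwW⟩⟩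
  set P : ℕ → Prop := fun n => Dn F n ⊆ U' with hPdef
  obtain ⟨n₁, hn₁N, hn₁⟩ := hmeet K1 U' hK1ne (fun z hz => hz.1) hU'o
    (self_subset_thickening (by linarith) K1) N
  obtain ⟨n₂, hn₂N, hn₂⟩ := hmeet K2 V' hK2ne (fun z hz => hz.1) hV'o
    (self_subset_thickening (by linarith) K2) N
  have hPn₁ : P n₁ := by
    rcases hDor n₁ hn₁N with h | h
    · exact h
    · obtain ⟨w, hw1, hw2⟩ := hn₁
      exact absurd (h hw1) (fun hww => Set.disjoint_left.mp hdisj' hw2 hww)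
  have hPn₂ : ¬ P n₂ := by
    obtain ⟨w, hw1, hw2⟩ := hn₂
    intro hP
    exact Set.disjoint_left.mp hdisj' (hP hw1) hw2
  have hswitch : ∃ k, N ≤ k ∧ ((P k ∧ ¬ P (k+1)) ∨ (¬ P k ∧ P (k+1))) := by
    by_contra hno
    push_neg at hno
    have hiff : ∀ k, N ≤ k → (P k ↔ P (k+1)) := by
      intro k hk
      have h1 := hno k hk
      exact ⟨h1.1, fun hk1 => by_contra fun hPk => h1.2 hPk hk1⟩
    have hconst : ∀ k, N ≤ k → (P N ↔ P k) := by
      intro k hk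
      induction k, hk using Nat.le_induction with
      | base => exact Iff.rfl
      | succ k hk ih => exact ih.trans (hiff k hk)
    exact hPn₂ ((hconst n₂ hn₂N).mp ((hconst n₁ hn₁N).mpr hPn₁))
  obtain ⟨k, hkN, hk⟩ := hswitch
  have hdist : dist ((k : ℝ)⁻¹ • (F^[k] 0 - 0)) (((k+1 : ℕ) : ℝ)⁻¹ • (F^[k+1] 0 - 0))
      < δ/3 := by
    rw [dist_comm, dist_eq_norm]
    exact lt_of_le_of_lt (avg_diff_le hM0 hM k 0) (hN₁ k (le_trans (le_max_right _ _) hkN))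
  have hu : ((k : ℝ)⁻¹ • (F^[k] 0 - 0)) ∈ Dn F k := ⟨0, rfl⟩
  have hv : (((k+1 : ℕ) : ℝ)⁻¹ • (F^[k+1] 0 - 0)) ∈ Dn F (k+1) := ⟨0, rfl⟩
  rcases hk with ⟨hPk, hPk1⟩ | ⟨hPk, hPk1⟩
  · have h2 : Dn F (k+1) ⊆ V' := (hDor (k+1) (hkN.trans (Nat.le_succ k))).resolve_left hPk1
    exact absurd hdist (not_lt.mpr (hsep _ (hPk hu) _ (h2 hv)))
  · have h2 : Dn F k ⊆ V' := (hDor k hkN).resolve_left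
      (fun hsub => hPk hsub)
    have h3 := hsep _ (hPk1 hv) _ (h2 hu)
    rw [dist_comm] at h3
    exact absurd hdist (not_lt.mpr h3)

end RotSetAux

/-- The Misiurewicz–Ziemian rotation set of a map `F : ℝ^d → ℝ^d`:
`ρ(F) = ⋂_{m≥0} closure ⋃_{n≥m} { (Fⁿ(z) - z)/n : z ∈ ℝ^d }`. -/
def rotSetD (d : ℕ) (F : (Fin d → ℝ) → (Fin d → ℝ)) : Set (Fin d → ℝ) :=
  ⋂ m : ℕ, closure {w | ∃ n : ℕ, m ≤ n ∧ ∃ z : Fin d → ℝ, w = (n : ℝ)⁻¹ • (F^[n] z - z)}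

/-- For a lift `ft` of a torus homeomorphism homotopic to the identity (i.e. a homeomorphism
of `ℝ^d` commuting with all integer translations), the rotation set is non-empty, compact
and connected. -/
theorem rotSet_nonempty_compact_connected
    (d : ℕ) (ft : (Fin d → ℝ) ≃ₜ (Fin d → ℝ))
    (hlift : ∀ z : Fin d → ℝ, ∀ p : Fin d → ℤ,
      ft (z + fun i => (p i : ℝ)) = ft z + fun i => (p i : ℝ)) :
    (rotSetD d (⇑ft)).Nonempty ∧ IsCompact (rotSetD d (⇑ft)) ∧
      IsConnected (rotSetD d (⇑ft)) := by
  obtain ⟨M, hM0, hM⟩ : ∃ M : ℝ, 0 ≤ M ∧ ∀ z, ‖ft z - z‖ ≤ M := by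
    have hg : Continuous fun z : Fin d → ℝ => ft z - z := ft.continuous.sub continuous_id
    obtain ⟨C, hC⟩ := (isCompact_Icc (a := (0 : Fin d → ℝ))
      (b := 1)).exists_bound_of_continuousOn hg.continuousOn
    refine ⟨max C 0, le_max_right _ _, fun z => ?_⟩
    have hz : ft z - z = ft (fun i => Int.fract (z i)) - (fun i => Int.fract (z i)) := by
      have h1 : z = (fun i => Int.fract (z i)) + fun i => ((⌊z i⌋ : ℤ) : ℝ) := by
        funext i; simp only [Pi.add_apply]; rw [Int.fract]; ring
      conv_lhs => rw [h1, hlift]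
      abel
    rw [hz]
    refine le_trans (hC _ ?_) (le_max_left _ _)
    constructor
    · intro i; exact Int.fract_nonneg _
    · intro i; exact (Int.fract_lt_one _).le
  exact RotSetAux.main (⇑ft) M ft.continuous hM0 hM
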